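/- arXiv:2405.08579 — 2 statements merged into one kernel-verified Lean document; each statement's English description precedes it below -/
import Mathlib

section
/- Fix c ∈ ℂ. In the field of rational functions in the variables u_ℓ (ℓ ∈ ℤ) with shift S, let D̃_t be the total derivative for the modified Narita–Itoh–Bogoyavlensky equation ∂_t(u) = u_0(u_0 + c)(u_2 u_1 − u_{−1} u_{−2}). Then Φ := (u_2 + c) u_1 u_0 satisfies D̃_t(Φ) = Φ·( S²(Φ) + S(Φ) − S^{-1}(Φ) − S^{-2}(Φ) ); that is, b = (u_2 + c) u_1 u_0 is a Miura-type transformation from the modified Narita–Itoh–Bogoyavlensky equation to the Narita–Itoh–Bogoyavlensky equation ∂_t(b) = b(b_2 + b_1 − b_{−1} − b_{−2}). -/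
/-!
Setup: `K1` is the field of rational functions over `ℂ` in the commuting
variables `u_ℓ` (`ℓ : ℤ`), realized as the fraction field of the multivariate
polynomial ring.  `S1` is the shift automorphism `S` (fixing `ℂ`, sending
`u_ℓ` to `u_{ℓ+1}`), and `Sz ℓ = S^ℓ`.
-/

set_option maxHeartbeats 1000000

noncomputable section

open MvPolynomial

abbrev R1 : Type := MvPolynomial ℤ ℂ
abbrev K1 : Type := FractionRing R1

def u (ℓ : ℤ) : K1 := algebraMap R1 K1 (X ℓ)

/-- The shift automorphism `S` of the field `K1`. -/
def S1 : RingAut K1 :=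
  IsFractionRing.ringEquivOfRingEquiv
    ((renameEquiv ℂ (Equiv.addRight (1:ℤ))).toRingEquiv)

/-- `Sz ℓ = S^ℓ`. -/
def Sz (ℓ : ℤ) : K1 ≃+* K1 := S1 ^ ℓ

lemma S1_u (k : ℤ) : S1 (u k) = u (k+1) := by
  simp [S1, u, IsLocalization.ringEquivOfRingEquiv_eq]

lemma S1_C (c : ℂ) : S1 (algebraMap ℂ K1 c) = algebraMap ℂ K1 c := by
  have : algebraMap ℂ K1 c = algebraMap R1 K1 (C c) := rfl
  rw [this]
  simp [S1, IsLocalization.ringEquivOfRingEquiv_eq]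

lemma S1_symm_u (k : ℤ) : S1.symm (u k) = u (k-1) := by
  apply S1.injective; rw [RingEquiv.apply_symm_apply, S1_u]; ring_nf

lemma S1_symm_C (c : ℂ) : S1.symm (algebraMap ℂ K1 c) = algebraMap ℂ K1 c := by
  apply S1.injective; rw [RingEquiv.apply_symm_apply, S1_C]

lemma ringAut_mul_apply {R : Type*} [Semiring R] (f g : RingAut R) (x : R) :
    (f*g) x = f (g x) := rfl

lemma ringAut_inv_apply {R : Type*} [Semiring R] (f : RingAut R) (x : R) :
    f⁻¹ x = f.symm x := rfl

lemma Sz_succ (n : ℤ) (x : K1) : Sz (n+1) x = Sz n (S1 x) := by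
  show (S1 ^ (n+1)) x = _; rw [zpow_add_one, ringAut_mul_apply]; rfl

lemma Sz_pred (n : ℤ) (x : K1) : Sz (n-1) x = Sz n (S1.symm x) := by
  show (S1 ^ (n-1)) x = _; rw [zpow_sub_one, ringAut_mul_apply, ringAut_inv_apply]; rfl

lemma Sz_zero (x : K1) : Sz 0 x = x := by
  show (S1 ^ (0:ℤ)) x = _; rw [zpow_zero]; rfl

lemma Sz_u (n k : ℤ) : Sz n (u k) = u (k+n) := by
  induction n using Int.induction_on generalizing k with
  | zero => rw [Sz_zero]; norm_num
  | succ m ih => rw [Sz_succ, S1_u, ih]; ring_nf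
  | pred m ih =>
      have h : (-(m:ℤ) - 1) = (-(m:ℤ)) - 1 := rfl
      rw [h, Sz_pred, S1_symm_u, ih]; ring_nf

lemma Sz_C (n : ℤ) (c : ℂ) : Sz n (algebraMap ℂ K1 c) = algebraMap ℂ K1 c := by
  induction n using Int.induction_on with
  | zero => rw [Sz_zero]
  | succ m ih => rw [Sz_succ, S1_C, ih]
  | pred m ih =>
      have h : (-(m:ℤ) - 1) = (-(m:ℤ)) - 1 := rfl
      rw [h, Sz_pred, S1_symm_C, ih]

/-- `Φ = (u_2 + c) u_1 u_0` is a Miura-type transformation from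
the modified Narita–Itoh–Bogoyavlensky equation
`∂ₜ(u) = u_0(u_0 + c)(u_2 u_1 − u_{−1} u_{−2})` to the
Narita–Itoh–Bogoyavlensky equation `∂ₜ(b) = b(b_2 + b_1 − b_{−1} − b_{−2})`,
i.e. `D̃_t(Φ) = Φ·(S²(Φ) + S(Φ) − S⁻¹(Φ) − S⁻²(Φ))`. -/
theorem statement11 (c : ℂ)
    -- the total derivative `D̃_t` for the modified NIB equation:
    (Dt : Derivation ℂ K1 K1)
    (hDtu : ∀ ℓ : ℤ,
      Dt (u ℓ) = Sz ℓ (u 0 * (u 0 + algebraMap ℂ K1 c) * (u 2 * u 1 - u (-1) * u (-2)))) :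
    Dt ((u 2 + algebraMap ℂ K1 c) * u 1 * u 0) =
      (u 2 + algebraMap ℂ K1 c) * u 1 * u 0 *
        (Sz 2 ((u 2 + algebraMap ℂ K1 c) * u 1 * u 0) +
          Sz 1 ((u 2 + algebraMap ℂ K1 c) * u 1 * u 0) -
          Sz (-1) ((u 2 + algebraMap ℂ K1 c) * u 1 * u 0) -
          Sz (-2) ((u 2 + algebraMap ℂ K1 c) * u 1 * u 0)) := by
  have h0 := hDtu 0
  have h1 := hDtu 1
  have h2 := hDtu 2
  simp only [map_mul, map_add, map_sub, Sz_u, Sz_C] at h0 h1 h2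
  norm_num at h0 h1 h2
  simp only [Derivation.leibniz, map_add, Derivation.map_algebraMap, add_zero, smul_eq_mul,
    map_mul, map_sub, Sz_u, Sz_C, h0, h1, h2]
  norm_num
  ring
end
end

section
/- Fix c, q ∈ ℂ. In the field of rational functions in the variables w_ℓ (ℓ ∈ ℤ) with shift S, let D̃_t be the total derivative for the equation ∂_t(w) = w_0 (w_2 w_1 − w_{−1} w_{−2}) (c w_{−1} w_0 − q)(c w_0 w_1 − q)(q w_0 + c) / ((w_{−2} w_{−1} w_0 + 1)(w_{−1} w_0 w_1 + 1)(w_0 w_1 w_2 + 1)). Then Φ := (q w_2 + c)/(w_0 w_1 w_2 + 1) − c satisfies D̃_t(Φ) = Φ·(Φ + c)·( S²(Φ)·S(Φ) − S^{-1}(Φ)·S^{-2}(Φ) ); that is, u_0 = (q w_2 + c)/(w_0 w_1 w_2 + 1) − c is a Miura-type transformation from this equation to the modified Narita–Itoh–Bogoyavlensky equation ∂_t(u) = u_0(u_0 + c)(u_2 u_1 − u_{−1} u_{−2}). -/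
/-!
Setup: `K1` is the field of rational functions over `ℂ` in the commuting
variables `w_ℓ` (`ℓ : ℤ`), realized as the fraction field of the multivariate
polynomial ring.  `S1` is the shift automorphism `S` (fixing `ℂ`, sending
`w_ℓ` to `w_{ℓ+1}`), and `Sz ℓ = S^ℓ`.
-/

set_option maxHeartbeats 1000000
set_option synthInstance.maxHeartbeats 400000

noncomputable section

open MvPolynomial

def w (ℓ : ℤ) : K1 := algebraMap R1 K1 (X ℓ)

lemma S1_w (ℓ : ℤ) : S1 (w ℓ) = w (ℓ + 1) := by
  simp [S1, w, IsFractionRing.ringEquivOfRingEquiv_algebraMap]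

lemma algC_eq (a : ℂ) : algebraMap ℂ K1 a = algebraMap R1 K1 (C a) := by
  rw [IsScalarTower.algebraMap_apply ℂ R1 K1]; rfl

lemma S1_c (a : ℂ) : S1 (algebraMap ℂ K1 a) = algebraMap ℂ K1 a := by
  rw [algC_eq]
  simp [S1, IsFractionRing.ringEquivOfRingEquiv_algebraMap]

lemma S1_inv_w (ℓ : ℤ) : S1⁻¹ (w ℓ) = w (ℓ - 1) := by
  have := S1_w (ℓ - 1)
  rw [sub_add_cancel] at this
  conv_lhs => rw [← this]
  exact S1.symm_apply_apply _

lemma S1_inv_c (a : ℂ) : S1⁻¹ (algebraMap ℂ K1 a) = algebraMap ℂ K1 a := by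
  conv_lhs => rw [← S1_c a]
  exact S1.symm_apply_apply _

lemma Sz_w (n ℓ : ℤ) : Sz n (w ℓ) = w (ℓ + n) := by
  show (S1 ^ n) (w ℓ) = w (ℓ + n)
  induction n using Int.induction_on generalizing ℓ with
  | zero => simp
  | succ k ih =>
      rw [zpow_add_one]
      show (S1 ^ (k:ℤ)) (S1 (w ℓ)) = _
      rw [S1_w, ih]; ring_nf
  | pred k ih =>
      rw [zpow_sub_one]
      show (S1 ^ (-k:ℤ)) (S1⁻¹ (w ℓ)) = _
      rw [S1_inv_w, ih]; ring_nf

lemma Sz_c (n : ℤ) (a : ℂ) : Sz n (algebraMap ℂ K1 a) = algebraMap ℂ K1 a := by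
  show (S1 ^ n) _ = _
  induction n using Int.induction_on with
  | zero => simp
  | succ k ih =>
      rw [zpow_add_one]
      show (S1 ^ (k:ℤ)) (S1 _) = _
      rw [S1_c, ih]
  | pred k ih =>
      rw [zpow_sub_one]
      show (S1 ^ (-k:ℤ)) (S1⁻¹ _) = _
      rw [S1_inv_c, ih]

lemma den_ne (i j k : ℤ) : w i * w j * w k + 1 ≠ 0 := by
  have h1 : w i * w j * w k + 1 = algebraMap R1 K1 (X i * X j * X k + 1) := by
    simp only [w, map_add, map_mul, map_one]
  rw [h1]
  intro h
  have hinj := IsFractionRing.injective R1 K1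
  have : (X i * X j * X k + 1 : R1) = 0 := by
    apply hinj; rw [h]; simp
  have := congrArg (constantCoeff) this
  simp at this


lemma comb {K : Type*} [Field K] (a b cc d e : K) (ha : a ≠ 0) (hb : b ≠ 0) (hc : cc ≠ 0)
    (hd : d ≠ 0) (he : e ≠ 0) (n0 n1 n2 qq m u v x y : K) :
    cc⁻¹ ^ 2 * (cc * (qq * (n2 / (cc * d * e))) -
        m * (u * (n2 / (cc * d * e)) + v * (x * (n1 / (b * cc * d)) + y * (n0 / (a * b * cc))))) =
    (qq * n2 * (a * b) * cc - m * (u * n2 * (a * b) + v * x * n1 * (a * e) + v * y * n0 * (d * e))) /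
      (a * b * cc ^ 3 * d * e) := by
  have hX2 : cc * d * e ≠ 0 := mul_ne_zero (mul_ne_zero hc hd) he
  have hX1 : b * cc * d ≠ 0 := mul_ne_zero (mul_ne_zero hb hc) hd
  have hX0 : a * b * cc ≠ 0 := mul_ne_zero (mul_ne_zero ha hb) hc
  simp only [mul_div_assoc']
  rw [div_add_div _ _ hX1 hX0]
  simp only [mul_div_assoc']
  rw [div_add_div _ _ hX2 (mul_ne_zero hX1 hX0)]
  simp only [mul_div_assoc']
  rw [div_sub_div _ _ hX2 (mul_ne_zero hX2 (mul_ne_zero hX1 hX0))]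
  rw [inv_pow, inv_mul_eq_div, div_div,
    div_eq_div_iff (mul_ne_zero (mul_ne_zero hX2 (mul_ne_zero hX2 (mul_ne_zero hX1 hX0))) (pow_ne_zero 2 hc))
      (mul_ne_zero (mul_ne_zero (mul_ne_zero (mul_ne_zero ha hb) (pow_ne_zero 3 hc)) hd) he)]
  ring

lemma comb2 {K : Type*} [Field K] (a b cc d e : K) (ha : a ≠ 0) (hb : b ≠ 0) (hc : cc ≠ 0)
    (hd : d ≠ 0) (he : e ≠ 0) (p0 pe pd pb pa m : K) :
    p0 / cc * (m / cc) * (pe / e * (pd / d) - pb / b * (pa / a)) =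
    (p0 * m * cc * (pe * pd * (a * b) - pb * pa * (d * e))) / (a * b * cc ^ 3 * d * e) := by
  simp only [div_mul_div_comm]
  rw [div_sub_div _ _ (mul_ne_zero he hd) (mul_ne_zero hb ha)]
  simp only [div_mul_div_comm]
  rw [div_eq_div_iff
    (mul_ne_zero (mul_ne_zero hc hc) (mul_ne_zero (mul_ne_zero he hd) (mul_ne_zero hb ha)))
    (mul_ne_zero (mul_ne_zero (mul_ne_zero (mul_ne_zero ha hb) (pow_ne_zero 3 hc)) hd) he)]
  ring

lemma subc {K : Type*} [Field K] (x d cc : K) (hd : d ≠ 0) :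
    x / d - cc = (x - cc * d) / d := by
  rw [div_sub' hd, mul_comm]

/-- `Φ = (q w_2 + c)/(w_0 w_1 w_2 + 1) − c` is a Miura-type
transformation from the equation
`∂ₜ(w) = w_0 (w_2 w_1 − w_{−1} w_{−2})(c w_{−1} w_0 − q)(c w_0 w_1 − q)(q w_0 + c)
/ ((w_{−2} w_{−1} w_0 + 1)(w_{−1} w_0 w_1 + 1)(w_0 w_1 w_2 + 1))`
to the modified Narita–Itoh–Bogoyavlensky equation
`∂ₜ(u) = u_0(u_0 + c)(u_2 u_1 − u_{−1} u_{−2})`, i.e.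
`D̃_t(Φ) = Φ·(Φ + c)·(S²(Φ)·S(Φ) − S⁻¹(Φ)·S⁻²(Φ))`. -/
theorem statement16 (c q : ℂ)
    -- the total derivative `D̃_t` for the equation above:
    (Dt : Derivation ℂ K1 K1)
    (hDtw : ∀ ℓ : ℤ,
      Dt (w ℓ) = Sz ℓ
        (w 0 * (w 2 * w 1 - w (-1) * w (-2)) *
          (algebraMap ℂ K1 c * w (-1) * w 0 - algebraMap ℂ K1 q) *
          (algebraMap ℂ K1 c * w 0 * w 1 - algebraMap ℂ K1 q) *
          (algebraMap ℂ K1 q * w 0 + algebraMap ℂ K1 c) /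
          ((w (-2) * w (-1) * w 0 + 1) * (w (-1) * w 0 * w 1 + 1) * (w 0 * w 1 * w 2 + 1)))) :
    Dt ((algebraMap ℂ K1 q * w 2 + algebraMap ℂ K1 c) / (w 0 * w 1 * w 2 + 1) -
        algebraMap ℂ K1 c) =
      ((algebraMap ℂ K1 q * w 2 + algebraMap ℂ K1 c) / (w 0 * w 1 * w 2 + 1) -
          algebraMap ℂ K1 c) *
        ((algebraMap ℂ K1 q * w 2 + algebraMap ℂ K1 c) / (w 0 * w 1 * w 2 + 1) -
            algebraMap ℂ K1 c + algebraMap ℂ K1 c) *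
        (Sz 2 ((algebraMap ℂ K1 q * w 2 + algebraMap ℂ K1 c) / (w 0 * w 1 * w 2 + 1) -
              algebraMap ℂ K1 c) *
            Sz 1 ((algebraMap ℂ K1 q * w 2 + algebraMap ℂ K1 c) / (w 0 * w 1 * w 2 + 1) -
              algebraMap ℂ K1 c) -
          Sz (-1) ((algebraMap ℂ K1 q * w 2 + algebraMap ℂ K1 c) / (w 0 * w 1 * w 2 + 1) -
              algebraMap ℂ K1 c) *
            Sz (-2) ((algebraMap ℂ K1 q * w 2 + algebraMap ℂ K1 c) / (w 0 * w 1 * w 2 + 1) -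
              algebraMap ℂ K1 c)) := by
  have h0 := hDtw 0
  have h1 := hDtw 1
  have h2 := hDtw 2
  simp only [map_div₀, map_mul, map_sub, map_add, map_one, Sz_w, Sz_c,
    Int.reduceAdd, Int.reduceNeg] at h0 h1 h2
  have hA : w (-2) * w (-1) * w 0 + 1 ≠ 0 := den_ne _ _ _
  have hB : w (-1) * w 0 * w 1 + 1 ≠ 0 := den_ne _ _ _
  have hC : w 0 * w 1 * w 2 + 1 ≠ 0 := den_ne _ _ _
  have hD : w 1 * w 2 * w 3 + 1 ≠ 0 := den_ne _ _ _
  have hE : w 2 * w 3 * w 4 + 1 ≠ 0 := den_ne _ _ _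
  simp only [map_div₀, map_mul, map_sub, map_add, map_one, Sz_w, Sz_c,
    Int.reduceAdd, Int.reduceNeg]
  rw [Derivation.map_algebraMap, sub_zero, Derivation.leibniz_div]
  simp only [Derivation.leibniz, map_add, Derivation.map_algebraMap,
    Derivation.map_one_eq_zero, smul_eq_mul, mul_zero, zero_mul, add_zero, zero_add,
    h0, h1, h2]
  rw [sub_add_cancel]
  rw [subc _ _ _ hC, subc _ _ _ hE, subc _ _ _ hD, subc _ _ _ hB, subc _ _ _ hA]
  rw [comb _ _ _ _ _ hA hB hC hD hE]
  rw [comb2 _ _ _ _ _ hA hB hC hD hE]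
  congr 1
  ring
end
end
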